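/- Let n, M ∈ ℕ, ε̄, Δ, ρ, η, ℓ > 0, let h_1, …, h_M : ℝⁿ → ℝ be convex twice continuously differentiable, and let w, λ, z₀ ∈ ℝⁿ. For a ∈ ℝⁿ and noise ξ ∈ ℝⁿ let Φ_a(ξ) denote the unique minimizer over ℝⁿ of z ↦ ⟨a, z⟩ + (ρ/2)‖w − z + (λ − ξ)/ρ‖² + (1/(2η))‖z − z₀‖² + Σ_{m=1}^M ln(1 + e^{ℓ·h_m(z)}). If a, a' ∈ ℝⁿ satisfy ‖a − a'‖₁ ≤ Δ, then for every Borel set S ⊆ ℝⁿ, e^{−ε̄}·Lap(ε̄,Δ)(Φ_{a'}⁻¹(S)) ≤ Lap(ε̄,Δ)(Φ_a⁻¹(S)) ≤ e^{ε̄}·Lap(ε̄,Δ)(Φ_{a'}⁻¹(S)). -/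

import Mathlib

open MeasureTheory
open scoped RealInnerProductSpace

/-- The Laplace measure `Lap(ε̄, Δ)` on `ℝⁿ`, with density
`ξ ↦ (ε̄/(2Δ))ⁿ · exp(−(ε̄/Δ)·‖ξ‖₁)` with respect to Lebesgue measure. -/
noncomputable def lapMeasure (n : ℕ) (ε Δ : ℝ) : Measure (EuclideanSpace ℝ (Fin n)) :=
  volume.withDensity fun ξ =>
    ENNReal.ofReal ((ε / (2 * Δ)) ^ n * Real.exp (-(ε / Δ) * ∑ i, |ξ i|))

lemma lapDensity_measurable (n : ℕ) (ε Δ : ℝ) :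
    Measurable (fun ξ : EuclideanSpace ℝ (Fin n) =>
      ENNReal.ofReal ((ε / (2 * Δ)) ^ n * Real.exp (-(ε / Δ) * ∑ i, |ξ i|))) := by
  apply ENNReal.measurable_ofReal.comp
  apply Measurable.const_mul
  apply Real.measurable_exp.comp
  apply Measurable.const_mul
  exact Finset.measurable_sum _ fun i _ => ((measurable_pi_apply i).comp (WithLp.measurable_ofLp 2 _)).abs

/-- One-sided translation bound for the Laplace measure. -/
lemma lapMeasure_translate_le (n : ℕ) (ε Δ : ℝ) (hε : 0 < ε) (hΔ : 0 < Δ)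
    (v : EuclideanSpace ℝ (Fin n)) (hv : ∑ i, |v i| ≤ Δ)
    (A : Set (EuclideanSpace ℝ (Fin n))) :
    lapMeasure n ε Δ ((fun ξ => ξ + v) ⁻¹' A) ≤
      ENNReal.ofReal (Real.exp ε) * lapMeasure n ε Δ A := by
  obtain ⟨B, hAB, hB, hBA⟩ := exists_measurable_superset (lapMeasure n ε Δ) A
  have hpre : (fun ξ : EuclideanSpace ℝ (Fin n) => ξ + v) ⁻¹' A ⊆
      (fun ξ => ξ + v) ⁻¹' B := Set.preimage_mono hAB
  refine le_trans (measure_mono hpre) ?_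
  rw [← hBA]
  -- now prove the bound for the measurable set B
  set d : EuclideanSpace ℝ (Fin n) → ENNReal := fun ξ =>
    ENNReal.ofReal ((ε / (2 * Δ)) ^ n * Real.exp (-(ε / Δ) * ∑ i, |ξ i|)) with hd_def
  have hd : Measurable d := lapDensity_measurable n ε Δ
  have hpreB : MeasurableSet ((fun ξ : EuclideanSpace ℝ (Fin n) => ξ + v) ⁻¹' B) :=
    (measurable_add_const v) hB
  have hptwise : ∀ ξ : EuclideanSpace ℝ (Fin n),
      d ξ ≤ ENNReal.ofReal (Real.exp ε) * d (ξ + v) := by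
    intro ξ
    have hsum : ∑ i, |(ξ + v) i| ≤ (∑ i, |ξ i|) + Δ := by
      have h1 : ∑ i, |(ξ + v) i| ≤ (∑ i, |ξ i|) + ∑ i, |v i| := by
        rw [← Finset.sum_add_distrib]
        refine Finset.sum_le_sum fun i _ => ?_
        have : (ξ + v) i = ξ i + v i := rfl
        rw [this]
        exact abs_add_le _ _
      linarith
    have hεΔ : 0 < ε / Δ := div_pos hε hΔ
    have hexp : Real.exp (-(ε / Δ) * ∑ i, |ξ i|) ≤
        Real.exp ε * Real.exp (-(ε / Δ) * ∑ i, |(ξ + v) i|) := by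
      rw [← Real.exp_add]
      apply Real.exp_le_exp.mpr
      have : (ε / Δ) * ((∑ i, |(ξ + v) i|) - ∑ i, |ξ i|) ≤ (ε / Δ) * Δ := by
        apply mul_le_mul_of_nonneg_left _ hεΔ.le
        linarith
      have hΔne : Δ ≠ 0 := hΔ.ne'
      have : (ε / Δ) * ((∑ i, |(ξ + v) i|) - ∑ i, |ξ i|) ≤ ε := by
        calc (ε / Δ) * ((∑ i, |(ξ + v) i|) - ∑ i, |ξ i|) ≤ (ε / Δ) * Δ := this
          _ = ε := by field_simp
      nlinarith
    have hc : (0:ℝ) ≤ (ε / (2 * Δ)) ^ n :=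
      pow_nonneg (div_nonneg hε.le (by linarith)) n
    calc d ξ = ENNReal.ofReal ((ε / (2 * Δ)) ^ n * Real.exp (-(ε / Δ) * ∑ i, |ξ i|)) := rfl
      _ ≤ ENNReal.ofReal (Real.exp ε *
            ((ε / (2 * Δ)) ^ n * Real.exp (-(ε / Δ) * ∑ i, |(ξ + v) i|))) := by
          apply ENNReal.ofReal_le_ofReal
          nlinarith [Real.exp_pos ε]
      _ = ENNReal.ofReal (Real.exp ε) * d (ξ + v) := by
          rw [ENNReal.ofReal_mul (Real.exp_pos ε).le]
  have hmp : MeasurePreserving (fun ξ : EuclideanSpace ℝ (Fin n) => ξ + v) volume volume :=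
    measurePreserving_add_right volume v
  have hemb : MeasurableEmbedding (fun ξ : EuclideanSpace ℝ (Fin n) => ξ + v) :=
    (MeasurableEquiv.addRight v).measurableEmbedding
  have hchange : ∫⁻ ξ in (fun ξ : EuclideanSpace ℝ (Fin n) => ξ + v) ⁻¹' B, d (ξ + v) ∂volume
      = ∫⁻ ξ in B, d ξ ∂volume :=
    hmp.setLIntegral_comp_preimage_emb hemb d B
  calc lapMeasure n ε Δ ((fun ξ => ξ + v) ⁻¹' B)
      = ∫⁻ ξ in (fun ξ : EuclideanSpace ℝ (Fin n) => ξ + v) ⁻¹' B, d ξ ∂volume := by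
        rw [lapMeasure, withDensity_apply _ hpreB]
    _ ≤ ∫⁻ ξ in (fun ξ : EuclideanSpace ℝ (Fin n) => ξ + v) ⁻¹' B,
          ENNReal.ofReal (Real.exp ε) * d (ξ + v) ∂volume :=
        lintegral_mono fun ξ => hptwise ξ
    _ = ENNReal.ofReal (Real.exp ε) *
          ∫⁻ ξ in (fun ξ : EuclideanSpace ℝ (Fin n) => ξ + v) ⁻¹' B, d (ξ + v) ∂volume := by
        exact lintegral_const_mul _ (hd.comp (measurable_add_const v))
    _ = ENNReal.ofReal (Real.exp ε) * ∫⁻ ξ in B, d ξ ∂volume := by rw [hchange]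
    _ = ENNReal.ofReal (Real.exp ε) * lapMeasure n ε Δ B := by
        rw [lapMeasure, withDensity_apply _ hB]

/-- Proposition 3.3: the log-penalized unconstrained proximal subproblem with Laplace
objective perturbation is `ε̄`-differentially private with respect to perturbations of
the linear coefficient of `ℓ₁`-magnitude at most `Δ`. -/
theorem penalized_prox_subproblem_DP
    (n M : ℕ) (ε Δ ρ η ℓ : ℝ) (hε : 0 < ε) (hΔ : 0 < Δ) (hρ : 0 < ρ) (hη : 0 < η)
    (hℓ : 0 < ℓ)
    (h : Fin M → EuclideanSpace ℝ (Fin n) → ℝ)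
    (hconvex : ∀ m, ConvexOn ℝ Set.univ (h m)) (hsmooth : ∀ m, ContDiff ℝ 2 (h m))
    (w lam z₀ : EuclideanSpace ℝ (Fin n))
    (Φ : EuclideanSpace ℝ (Fin n) → EuclideanSpace ℝ (Fin n) → EuclideanSpace ℝ (Fin n))
    (hΦ : ∀ a ξ : EuclideanSpace ℝ (Fin n),
      IsMinOn (fun z => ⟪a, z⟫ + ρ / 2 * ‖w - z + ρ⁻¹ • (lam - ξ)‖ ^ 2 +
          1 / (2 * η) * ‖z - z₀‖ ^ 2 + ∑ m, Real.log (1 + Real.exp (ℓ * h m z)))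
        Set.univ (Φ a ξ) ∧
      ∀ y, IsMinOn (fun z => ⟪a, z⟫ + ρ / 2 * ‖w - z + ρ⁻¹ • (lam - ξ)‖ ^ 2 +
          1 / (2 * η) * ‖z - z₀‖ ^ 2 + ∑ m, Real.log (1 + Real.exp (ℓ * h m z)))
        Set.univ y → y = Φ a ξ)
    (a a' : EuclideanSpace ℝ (Fin n)) (ha : ∑ i, |a i - a' i| ≤ Δ)
    (S : Set (EuclideanSpace ℝ (Fin n))) (hS : MeasurableSet S) :
    ENNReal.ofReal (Real.exp (-ε)) * lapMeasure n ε Δ (Φ a' ⁻¹' S) ≤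
        lapMeasure n ε Δ (Φ a ⁻¹' S) ∧
      lapMeasure n ε Δ (Φ a ⁻¹' S) ≤
        ENNReal.ofReal (Real.exp ε) * lapMeasure n ε Δ (Φ a' ⁻¹' S) := by
  -- The objectives for (a, ξ) and (a', ξ + (a - a')) differ by a constant (in z),
  -- hence have the same minimizers.
  have halg : ∀ b b' ξ z : EuclideanSpace ℝ (Fin n),
      ⟪b, z⟫ + ρ / 2 * ‖w - z + ρ⁻¹ • (lam - ξ)‖ ^ 2 =
        ⟪b', z⟫ + ρ / 2 * ‖w - z + ρ⁻¹ • (lam - (ξ + (b - b')))‖ ^ 2 +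
          (⟪w, b - b'⟫ + ρ⁻¹ * ⟪lam - ξ, b - b'⟫ - (2 * ρ)⁻¹ * ‖b - b'‖ ^ 2) := by
    intro b b' ξ z
    have h1 : w - z + ρ⁻¹ • (lam - (ξ + (b - b'))) =
        (w - z + ρ⁻¹ • (lam - ξ)) - ρ⁻¹ • (b - b') := by module
    rw [h1, norm_sub_sq_real, norm_smul, real_inner_smul_right]
    have h2 : ⟪w - z + ρ⁻¹ • (lam - ξ), b - b'⟫ =
        ⟪w, b - b'⟫ - ⟪z, b - b'⟫ + ρ⁻¹ * ⟪lam - ξ, b - b'⟫ := by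
      rw [inner_add_left, inner_sub_left, real_inner_smul_left]
    have h3 : ⟪b, z⟫ - ⟪b', z⟫ = ⟪z, b - b'⟫ := by
      rw [inner_sub_right, real_inner_comm b z, real_inner_comm b' z]
    rw [h2, Real.norm_eq_abs, abs_of_pos (inv_pos.mpr hρ)]
    set A := (⟪b, z⟫ : ℝ); set A' := (⟪b', z⟫ : ℝ); set W := (⟪w, b - b'⟫ : ℝ)
    set Z := (⟪z, b - b'⟫ : ℝ); set L := (⟪lam - ξ, b - b'⟫ : ℝ)
    set U := ‖w - z + ρ⁻¹ • (lam - ξ)‖; set N := ‖b - b'‖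
    have hρ' : ρ ≠ 0 := hρ.ne'
    field_simp
    linear_combination (2 * ρ) * h3
  have key : ∀ b b' ξ : EuclideanSpace ℝ (Fin n), Φ b ξ = Φ b' (ξ + (b - b')) := by
    intro b b' ξ
    obtain ⟨_, huniq⟩ := hΦ b ξ
    obtain ⟨hmin', _⟩ := hΦ b' (ξ + (b - b'))
    refine (huniq _ ?_).symm
    rw [isMinOn_iff]
    intro y _
    have hy := (isMinOn_iff.mp hmin') y (Set.mem_univ y)
    have e1 := halg b b' ξ (Φ b' (ξ + (b - b')))
    have e2 := halg b b' ξ y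
    linarith
  -- set-level consequence
  have hset : Φ a ⁻¹' S = (fun ξ => ξ + (a - a')) ⁻¹' (Φ a' ⁻¹' S) := by
    ext ξ
    simp only [Set.mem_preimage]
    rw [key a a' ξ]
  have hset' : Φ a' ⁻¹' S = (fun ξ => ξ + (a' - a)) ⁻¹' (Φ a ⁻¹' S) := by
    ext ξ
    simp only [Set.mem_preimage]
    rw [key a' a ξ]
  have ha' : ∑ i, |a' i - a i| ≤ Δ := by
    have : ∀ i, |a' i - a i| = |a i - a' i| := fun i => abs_sub_comm _ _
    simpa [this] using ha
  have hva : ∀ i, (a - a') i = a i - a' i := fun i => rfl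
  have hva' : ∀ i, (a' - a) i = a' i - a i := fun i => rfl
  have H1 : lapMeasure n ε Δ (Φ a ⁻¹' S) ≤
      ENNReal.ofReal (Real.exp ε) * lapMeasure n ε Δ (Φ a' ⁻¹' S) := by
    rw [hset]
    exact lapMeasure_translate_le n ε Δ hε hΔ (a - a') (by simpa [hva] using ha) _
  have H2 : lapMeasure n ε Δ (Φ a' ⁻¹' S) ≤
      ENNReal.ofReal (Real.exp ε) * lapMeasure n ε Δ (Φ a ⁻¹' S) := by
    rw [hset']
    exact lapMeasure_translate_le n ε Δ hε hΔ (a' - a) (by simpa [hva'] using ha') _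
  refine ⟨?_, H1⟩
  calc ENNReal.ofReal (Real.exp (-ε)) * lapMeasure n ε Δ (Φ a' ⁻¹' S)
      ≤ ENNReal.ofReal (Real.exp (-ε)) *
          (ENNReal.ofReal (Real.exp ε) * lapMeasure n ε Δ (Φ a ⁻¹' S)) :=
        by gcongr
    _ = lapMeasure n ε Δ (Φ a ⁻¹' S) := by
        rw [← mul_assoc, ← ENNReal.ofReal_mul (Real.exp_pos (-ε)).le, ← Real.exp_add,
          neg_add_cancel, Real.exp_zero, ENNReal.ofReal_one, one_mul]
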